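/- Let H be a separable complex Hilbert space, U : ℝ → U(H) a strongly continuous unitary representation, 𝒫 = {a*a : a ∈ B(H), C_a < ∞} and 𝒟 = span_ℂ 𝒫. For x ∈ 𝒟 define ‖x‖_𝒟 := sup_{‖ψ‖=1} ∫_ℝ |⟨ψ, U(t) x U(t)* ψ⟩| dt. Then: (i) ‖x‖_𝒟 < ∞ for every x ∈ 𝒟; (ii) ‖·‖_𝒟 is a norm on 𝒟 (subadditive, absolutely homogeneous, and ‖x‖_𝒟 = 0 implies x = 0); (iii) ‖x*‖_𝒟 = ‖x‖_𝒟; (iv) ‖a*a‖_𝒟 = C_a² for every a*a ∈ 𝒫; and (v) for all x, y ∈ 𝒟 and t ∈ ℝ, the operator y U(t) x U(t)* lies in 𝒟 and ‖y U(t) x U(t)*‖_𝒟 ≤ C_{y*} · C_x. -/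

import Mathlib

open MeasureTheory
open scoped ENNReal NNReal

local notation "⟪" x ", " y "⟫_ℂ" => @inner ℂ _ _ x y

noncomputable section

/-- `Csq U a` is the square `C_a²` of the constant
`C_a = (sup_{‖ψ‖=1} ∫_ℝ ‖a U(t)* ψ‖² dt)^{1/2} ∈ [0,∞]`. -/
def Csq {H : Type*} [NormedAddCommGroup H] [InnerProductSpace ℂ H] [CompleteSpace H]
    (U : ℝ → (H →L[ℂ] H)) (a : H →L[ℂ] H) : ℝ≥0∞ :=
  ⨆ ψ : {ψ : H // ‖ψ‖ = 1}, ∫⁻ t : ℝ, (‖a (star (U t) (ψ : H))‖₊ : ℝ≥0∞) ^ 2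

/-- The set `𝒫 = {a*a : C_a < ∞}` of positive `t`-integrable operators. -/
def posTIntegrable {H : Type*} [NormedAddCommGroup H] [InnerProductSpace ℂ H] [CompleteSpace H]
    (U : ℝ → (H →L[ℂ] H)) : Set (H →L[ℂ] H) :=
  {x | ∃ a : H →L[ℂ] H, Csq U a ≠ ⊤ ∧ x = star a * a}

/-- The `𝒟`-norm `‖x‖_𝒟 = sup_{‖ψ‖=1} ∫_ℝ |⟨ψ, U(t) x U(t)* ψ⟩| dt`, valued in `[0,∞]`. -/
def Dnorm {H : Type*} [NormedAddCommGroup H] [InnerProductSpace ℂ H] [CompleteSpace H]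
    (U : ℝ → (H →L[ℂ] H)) (x : H →L[ℂ] H) : ℝ≥0∞ :=
  ⨆ ψ : {ψ : H // ‖ψ‖ = 1},
    ∫⁻ t : ℝ, (‖⟪(ψ : H), (U t * x * star (U t)) (ψ : H)⟫_ℂ‖₊ : ℝ≥0∞)

/-- Elementary inequality in `ℝ≥0∞`: `(x+y)² ≤ 4(x²+y²)`. -/
lemma enn_sq_add_le (x y : ℝ≥0∞) : (x + y) ^ 2 ≤ 4 * (x ^ 2 + y ^ 2) := by
  have h1 : x + y ≤ 2 * max x y := by
    rcases le_total x y with h | h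
    · calc x + y ≤ y + y := by gcongr
        _ = 2 * y := (two_mul y).symm
        _ ≤ 2 * max x y := by gcongr; exact le_max_right x y
    · calc x + y ≤ x + x := by gcongr
        _ = 2 * x := (two_mul x).symm
        _ ≤ 2 * max x y := by gcongr; exact le_max_left x y
  calc (x + y) ^ 2 ≤ (2 * max x y) ^ 2 := by gcongr
    _ = 4 * (max x y) ^ 2 := by rw [mul_pow]; ring
    _ ≤ 4 * (x ^ 2 + y ^ 2) := by
        gcongr
        rcases max_cases x y with ⟨h, _⟩ | ⟨h, _⟩ <;> rw [h]
        · exact le_self_add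
        · exact le_add_self

/-- Polarization identity in a complex star algebra:
`c* d = (1/4) ∑_{k<4} iᵏ (d + iᵏ c)* (d + iᵏ c)`. -/
lemma polarization {A : Type*} [Ring A] [StarRing A] [Algebra ℂ A] [StarModule ℂ A] (c d : A) :
    star c * d = (4 : ℂ)⁻¹ • ∑ k ∈ Finset.range 4,
      (Complex.I ^ k) • (star (d + Complex.I ^ k • c) * (d + Complex.I ^ k • c)) := by
  have h3 : (Complex.I) ^ 3 = -Complex.I := by
    rw [pow_succ, Complex.I_sq]; ring
  simp only [Finset.sum_range_succ, Finset.sum_range_zero, zero_add, pow_zero, pow_one,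
    Complex.I_sq, h3, one_smul, neg_smul, star_add, star_smul, star_neg, map_one,
    Complex.star_def, Complex.conj_I, map_neg, mul_add, add_mul, smul_add, smul_smul,
    smul_mul_assoc, mul_smul_comm, Complex.I_mul_I, neg_neg, one_mul, mul_one, neg_mul, mul_neg]
  module

section Helpers

variable {H : Type*} [NormedAddCommGroup H] [InnerProductSpace ℂ H] [CompleteSpace H]
variable {U : ℝ → (H →L[ℂ] H)}

section basics
variable (hU0 : U 0 = 1) (hUadd : ∀ s t : ℝ, U (s + t) = U s * U t)
  (hUuni : ∀ t : ℝ, U t ∈ unitary (H →L[ℂ] H))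

include hU0 hUadd hUuni in
lemma star_U (t : ℝ) : star (U t) = U (-t) := by
  have h1 : U t * U (-t) = 1 := by rw [← hUadd]; simp [hU0]
  have h2 : star (U t) * U t = 1 := (hUuni t).1
  calc star (U t) = star (U t) * (U t * U (-t)) := by rw [h1, mul_one]
    _ = (star (U t) * U t) * U (-t) := by rw [mul_assoc]
    _ = U (-t) := by rw [h2, one_mul]

include hUuni in
lemma nnnorm_U_apply (t : ℝ) (v : H) : ‖U t v‖₊ = ‖v‖₊ := by
  apply NNReal.coe_injective
  simp only [coe_nnnorm]
  have h : ⟪U t v, U t v⟫_ℂ = ⟪v, v⟫_ℂ := by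
    rw [← ContinuousLinearMap.adjoint_inner_right, ← ContinuousLinearMap.star_eq_adjoint]
    rw [show star (U t) ((U t) v) = (star (U t) * U t) v from rfl, (hUuni t).1]
    rfl
  rw [inner_self_eq_norm_sq_to_K, inner_self_eq_norm_sq_to_K] at h
  exact (sq_eq_sq₀ (norm_nonneg _) (norm_nonneg _)).mp (by exact_mod_cast h)

include hUadd in
lemma starU_starU (s t : ℝ) (ψ : H) :
    star (U t) (star (U s) ψ) = star (U (s + t)) ψ := by
  rw [show star (U t) (star (U s) ψ) = (star (U t) * star (U s)) ψ from rfl, ← star_mul,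
    ← hUadd]

end basics

lemma inner_conj_apply (x : H →L[ℂ] H) (t : ℝ) (ψ : H) :
    ⟪ψ, (U t * x * star (U t)) ψ⟫_ℂ = ⟪star (U t) ψ, x (star (U t) ψ)⟫_ℂ := by
  rw [show (U t * x * star (U t)) ψ = U t (x (star (U t) ψ)) from rfl,
    ContinuousLinearMap.star_eq_adjoint, ContinuousLinearMap.adjoint_inner_left]

/-- `Dnorm` is star-invariant. -/
lemma Dnorm_star (x : H →L[ℂ] H) : Dnorm U (star x) = Dnorm U x := by
  unfold Dnorm
  congr 1; ext ψ; congr 1; ext t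
  rw [inner_conj_apply, inner_conj_apply]
  simp only [ContinuousLinearMap.star_eq_adjoint]
  rw [ContinuousLinearMap.adjoint_inner_right, ← inner_conj_symm]
  rw [RCLike.nnnorm_conj]

/-- `Dnorm (a* a) = Csq a`. -/
lemma Dnorm_star_mul_self (a : H →L[ℂ] H) : Dnorm U (star a * a) = Csq U a := by
  unfold Dnorm Csq
  congr 1; ext ψ; congr 1; ext t
  rw [inner_conj_apply]
  rw [show (star a * a) (star (U t) ψ.1) = star a (a (star (U t) ψ.1)) from rfl]
  simp only [ContinuousLinearMap.star_eq_adjoint]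
  rw [ContinuousLinearMap.adjoint_inner_right, inner_self_eq_norm_sq_to_K]
  simp [← Complex.ofReal_pow, Complex.nnnorm_real, nnnorm_pow, nnnorm_norm]

lemma Dnorm_zero : Dnorm U (0 : H →L[ℂ] H) = 0 := by
  unfold Dnorm
  simp

/-- Absolute homogeneity of `Dnorm`. -/
lemma Dnorm_smul (c : ℂ) (x : H →L[ℂ] H) : Dnorm U (c • x) = (‖c‖₊ : ℝ≥0∞) * Dnorm U x := by
  unfold Dnorm
  rw [ENNReal.mul_iSup]
  congr 1; ext ψ
  rw [← lintegral_const_mul' _ _ ENNReal.coe_ne_top]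
  congr 1; ext t
  have : (U t * (c • x) * star (U t)) (ψ : H) = c • ((U t * x * star (U t)) (ψ : H)) := by
    simp [mul_smul_comm, smul_mul_assoc]
  rw [this, inner_smul_right]
  rw [nnnorm_mul]
  push_cast
  ring

section cont
variable (hstar : ∀ t : ℝ, star (U t) = U (-t)) (hUcont : ∀ ψ : H, Continuous fun t : ℝ => U t ψ)

include hstar hUcont in
lemma cont_starU (ψ : H) : Continuous fun t : ℝ => star (U t) ψ := by
  simp only [hstar]
  exact (hUcont ψ).comp continuous_neg

include hstar hUcont in
lemma cont_inner (x : H →L[ℂ] H) (ψ : H) :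
    Continuous fun t : ℝ => ⟪star (U t) ψ, x (star (U t) ψ)⟫_ℂ :=
  (cont_starU hstar hUcont ψ).inner (x.continuous.comp (cont_starU hstar hUcont ψ))

include hstar hUcont in
lemma meas_integrand (x : H →L[ℂ] H) (ψ : H) :
    Measurable fun t : ℝ => (‖⟪ψ, (U t * x * star (U t)) ψ⟫_ℂ‖₊ : ℝ≥0∞) := by
  simp only [inner_conj_apply]
  exact (ENNReal.continuous_coe.comp
    (continuous_nnnorm.comp (cont_inner hstar hUcont x ψ))).measurable

include hstar hUcont in
lemma meas_integrand_sq (a : H →L[ℂ] H) (ψ : H) :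
    Measurable fun t : ℝ => (‖a (star (U t) ψ)‖₊ : ℝ≥0∞) ^ 2 := by
  have : Continuous fun t : ℝ => (‖a (star (U t) ψ)‖₊ : ℝ≥0∞) :=
    ENNReal.continuous_coe.comp
      (continuous_nnnorm.comp (a.continuous.comp (cont_starU hstar hUcont ψ)))
  exact ((ENNReal.continuous_pow 2).comp this).measurable

include hstar hUcont in
/-- Subadditivity of `Dnorm`. -/
lemma Dnorm_add_le (x y : H →L[ℂ] H) : Dnorm U (x + y) ≤ Dnorm U x + Dnorm U y := by
  unfold Dnorm
  refine iSup_le fun ψ => ?_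
  calc ∫⁻ t : ℝ, (‖⟪(ψ : H), (U t * (x + y) * star (U t)) (ψ : H)⟫_ℂ‖₊ : ℝ≥0∞)
      ≤ ∫⁻ t : ℝ, ((‖⟪(ψ : H), (U t * x * star (U t)) (ψ : H)⟫_ℂ‖₊ : ℝ≥0∞)
          + (‖⟪(ψ : H), (U t * y * star (U t)) (ψ : H)⟫_ℂ‖₊ : ℝ≥0∞)) := by
        refine lintegral_mono fun t => ?_
        have : (U t * (x + y) * star (U t)) (ψ : H)
            = (U t * x * star (U t)) (ψ : H) + (U t * y * star (U t)) (ψ : H) := by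
          simp [mul_add, add_mul]
        rw [this, inner_add_right]
        exact ENNReal.coe_le_coe.mpr (nnnorm_add_le _ _)
    _ = (∫⁻ t : ℝ, (‖⟪(ψ : H), (U t * x * star (U t)) (ψ : H)⟫_ℂ‖₊ : ℝ≥0∞))
        + ∫⁻ t : ℝ, (‖⟪(ψ : H), (U t * y * star (U t)) (ψ : H)⟫_ℂ‖₊ : ℝ≥0∞) :=
        lintegral_add_left (meas_integrand hstar hUcont x ψ) _
    _ ≤ _ := add_le_add
        (le_iSup (fun ψ : {ψ : H // ‖ψ‖ = 1} =>
          ∫⁻ t : ℝ, (‖⟪(ψ : H), (U t * x * star (U t)) (ψ : H)⟫_ℂ‖₊ : ℝ≥0∞)) ψ)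
        (le_iSup (fun ψ : {ψ : H // ‖ψ‖ = 1} =>
          ∫⁻ t : ℝ, (‖⟪(ψ : H), (U t * y * star (U t)) (ψ : H)⟫_ℂ‖₊ : ℝ≥0∞)) ψ)

include hstar hUcont in
/-- Definiteness of `Dnorm` (uses strong continuity). -/
lemma Dnorm_eq_zero {x : H →L[ℂ] H} (hU0 : U 0 = 1) (h : Dnorm U x = 0) : x = 0 := by
  have key : ∀ ψ : H, ‖ψ‖ = 1 → ⟪ψ, x ψ⟫_ℂ = 0 := by
    intro ψ hψ
    have h0 : (∫⁻ t : ℝ, (‖⟪ψ, (U t * x * star (U t)) ψ⟫_ℂ‖₊ : ℝ≥0∞)) = 0 := by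
      have := iSup_eq_bot.mp h ⟨ψ, hψ⟩
      simpa using this
    have hae : (fun t : ℝ => ⟪star (U t) ψ, x (star (U t) ψ)⟫_ℂ) =ᵐ[volume]
        (fun _ => (0 : ℂ)) := by
      have := (lintegral_eq_zero_iff (meas_integrand hstar hUcont x ψ)).mp h0
      filter_upwards [this] with t ht
      simp only [inner_conj_apply] at ht
      have : (‖⟪star (U t) ψ, x (star (U t) ψ)⟫_ℂ‖₊ : ℝ≥0∞) = 0 := ht
      simpa using this
    have heq : (fun t : ℝ => ⟪star (U t) ψ, x (star (U t) ψ)⟫_ℂ) = fun _ => (0 : ℂ) :=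
      (Continuous.ae_eq_iff_eq volume (cont_inner hstar hUcont x ψ) continuous_const).mp hae
    have h00 := congrFun heq 0
    simpa [hU0] using h00
  have key2 : ∀ v : H, ⟪(x : H →ₗ[ℂ] H) v, v⟫_ℂ = 0 := by
    intro v
    rcases eq_or_ne v 0 with rfl | hv
    · simp
    · have hψ : ‖(‖v‖⁻¹ : ℂ) • v‖ = 1 := norm_smul_inv_norm hv
      have := key _ hψ
      rw [_root_.map_smul, inner_smul_left, inner_smul_right] at this
      have hne : ((‖v‖ : ℂ))⁻¹ ≠ 0 := by
        simpa using (Complex.ofReal_ne_zero.mpr (norm_ne_zero_iff.mpr hv))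
      have h3 : ⟪v, x v⟫_ℂ = 0 := by
        simp only [map_inv₀, Complex.conj_ofReal] at this
        rcases mul_eq_zero.mp this with h | h
        · exact absurd h hne
        rcases mul_eq_zero.mp h with h' | h'
        · exact absurd h' hne
        · exact h'
      rw [← inner_conj_symm]
      simp only [ContinuousLinearMap.coe_coe]
      rw [h3, map_zero]
  have := (inner_map_self_eq_zero (x : H →ₗ[ℂ] H)).mp key2
  ext v
  exact congrFun (congrArg DFunLike.coe this) v

end cont

section trans
variable (hUadd : ∀ s t : ℝ, U (s + t) = U s * U t)
  (hUuni : ∀ t : ℝ, U t ∈ unitary (H →L[ℂ] H))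

include hUadd hUuni in
/-- `Csq` is invariant under conjugation by the group. -/
lemma Csq_conj (x : H →L[ℂ] H) (t : ℝ) :
    Csq U (U t * x * star (U t)) = Csq U x := by
  unfold Csq
  congr 1; ext ψ
  have : ∀ s : ℝ, (‖(U t * x * star (U t)) (star (U s) ψ.1)‖₊ : ℝ≥0∞) ^ 2
      = (‖x (star (U (s + t)) ψ.1)‖₊ : ℝ≥0∞) ^ 2 := by
    intro s
    rw [show (U t * x * star (U t)) (star (U s) ψ.1)
        = U t (x (star (U t) (star (U s) ψ.1))) from rfl,
      nnnorm_U_apply hUuni, starU_starU hUadd]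
  simp_rw [this]
  exact lintegral_add_right_eq_self (fun s => (‖x (star (U s) ψ.1)‖₊ : ℝ≥0∞) ^ 2) t

include hUadd in
lemma Csq_mul_starU (b : H →L[ℂ] H) (t : ℝ) :
    Csq U (b * star (U t)) = Csq U b := by
  unfold Csq
  congr 1; ext ψ
  have : ∀ s : ℝ, (‖(b * star (U t)) (star (U s) ψ.1)‖₊ : ℝ≥0∞) ^ 2
      = (‖b (star (U (s + t)) ψ.1)‖₊ : ℝ≥0∞) ^ 2 := by
    intro s
    rw [show (b * star (U t)) (star (U s) ψ.1) = b (star (U t) (star (U s) ψ.1)) from rfl,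
      starU_starU hUadd]
  simp_rw [this]
  exact lintegral_add_right_eq_self (fun s => (‖b (star (U s) ψ.1)‖₊ : ℝ≥0∞) ^ 2) t

end trans

lemma Csq_comp_le (e a : H →L[ℂ] H) : Csq U (e * a) ≤ (‖e‖₊ : ℝ≥0∞) ^ 2 * Csq U a := by
  unfold Csq
  rw [ENNReal.mul_iSup]
  refine iSup_mono fun ψ => ?_
  rw [← lintegral_const_mul' _ _ (by rw [← ENNReal.coe_pow]; exact ENNReal.coe_ne_top)]
  refine lintegral_mono fun t => ?_
  rw [← mul_pow]
  gcongr
  calc (‖(e * a) (star (U t) ψ.1)‖₊ : ℝ≥0∞) = ‖e (a (star (U t) ψ.1))‖₊ := rfl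
    _ ≤ ‖e‖₊ * ‖a (star (U t) ψ.1)‖₊ := by exact_mod_cast e.le_opNNNorm _
    _ = _ := by ring

lemma Csq_smul (c : ℂ) (a : H →L[ℂ] H) : Csq U (c • a) = (‖c‖₊ : ℝ≥0∞) ^ 2 * Csq U a := by
  unfold Csq
  rw [ENNReal.mul_iSup]
  congr 1; ext ψ
  rw [← lintegral_const_mul' _ _ (by rw [← ENNReal.coe_pow]; exact ENNReal.coe_ne_top)]
  congr 1; ext t
  rw [show (c • a) (star (U t) ψ.1) = c • (a (star (U t) ψ.1)) from rfl, nnnorm_smul]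
  push_cast
  ring

section csbound
variable (hstar : ∀ t : ℝ, star (U t) = U (-t)) (hUcont : ∀ ψ : H, Continuous fun t : ℝ => U t ψ)

include hstar hUcont in
lemma Csq_add_le (c d : H →L[ℂ] H) :
    Csq U (c + d) ≤ 4 * (Csq U c + Csq U d) := by
  unfold Csq
  refine iSup_le fun ψ => ?_
  calc (∫⁻ t : ℝ, (‖(c + d) (star (U t) ψ.1)‖₊ : ℝ≥0∞) ^ 2)
      ≤ ∫⁻ t : ℝ, 4 * ((‖c (star (U t) ψ.1)‖₊ : ℝ≥0∞) ^ 2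
          + (‖d (star (U t) ψ.1)‖₊ : ℝ≥0∞) ^ 2) := by
        refine lintegral_mono fun t => ?_
        refine le_trans ?_ (enn_sq_add_le _ _)
        gcongr
        rw [show (c + d) (star (U t) ψ.1) = c (star (U t) ψ.1) + d (star (U t) ψ.1) from rfl]
        exact ENNReal.coe_le_coe.mpr (nnnorm_add_le _ _)
    _ = 4 * ((∫⁻ t : ℝ, (‖c (star (U t) ψ.1)‖₊ : ℝ≥0∞) ^ 2)
          + ∫⁻ t : ℝ, (‖d (star (U t) ψ.1)‖₊ : ℝ≥0∞) ^ 2) := by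
        rw [lintegral_const_mul' _ _ (by norm_num),
          lintegral_add_left (meas_integrand_sq hstar hUcont c ψ.1)]
    _ ≤ 4 * (Csq U c + Csq U d) := by
        gcongr
        · exact le_iSup (fun ψ : {ψ : H // ‖ψ‖ = 1} =>
            ∫⁻ t : ℝ, (‖c (star (U t) ψ.1)‖₊ : ℝ≥0∞) ^ 2) ψ
        · exact le_iSup (fun ψ : {ψ : H // ‖ψ‖ = 1} =>
            ∫⁻ t : ℝ, (‖d (star (U t) ψ.1)‖₊ : ℝ≥0∞) ^ 2) ψ

include hstar hUcont in
/-- The Cauchy–Schwarz bound `‖y x‖_𝒟 ≤ C_{y*} C_x`. -/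
lemma Dnorm_mul_le (x y : H →L[ℂ] H) :
    Dnorm U (y * x) ≤ Csq U (star y) ^ (1 / 2 : ℝ) * Csq U x ^ (1 / 2 : ℝ) := by
  unfold Dnorm
  refine iSup_le fun ψ => ?_
  have hcs : ∀ s : ℝ, (‖⟪(ψ : H), (U s * (y * x) * star (U s)) (ψ : H)⟫_ℂ‖₊ : ℝ≥0∞)
      ≤ (‖star y (star (U s) ψ.1)‖₊ : ℝ≥0∞) * (‖x (star (U s) ψ.1)‖₊ : ℝ≥0∞) := by
    intro s
    rw [inner_conj_apply, show (y * x) (star (U s) ψ.1) = y (x (star (U s) ψ.1)) from rfl,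
      ← ContinuousLinearMap.adjoint_inner_left y, ← ContinuousLinearMap.star_eq_adjoint]
    exact_mod_cast nnnorm_inner_le_nnnorm _ _
  have hc : ∀ (a : H →L[ℂ] H), Continuous fun s : ℝ => (‖a (star (U s) ψ.1)‖₊ : ℝ≥0∞) :=
    fun a => ENNReal.continuous_coe.comp
      (continuous_nnnorm.comp (a.continuous.comp (cont_starU hstar hUcont ψ.1)))
  calc (∫⁻ s : ℝ, (‖⟪(ψ : H), (U s * (y * x) * star (U s)) (ψ : H)⟫_ℂ‖₊ : ℝ≥0∞))
      ≤ ∫⁻ s : ℝ, (‖star y (star (U s) ψ.1)‖₊ : ℝ≥0∞) * (‖x (star (U s) ψ.1)‖₊ : ℝ≥0∞) :=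
        lintegral_mono hcs
    _ ≤ (∫⁻ s : ℝ, (‖star y (star (U s) ψ.1)‖₊ : ℝ≥0∞) ^ (2 : ℝ)) ^ (1 / 2 : ℝ)
        * (∫⁻ s : ℝ, (‖x (star (U s) ψ.1)‖₊ : ℝ≥0∞) ^ (2 : ℝ)) ^ (1 / 2 : ℝ) :=
        ENNReal.lintegral_mul_le_Lp_mul_Lq volume (⟨by norm_num, by norm_num, by norm_num⟩)
          (hc (star y)).aemeasurable (hc x).aemeasurable
    _ ≤ Csq U (star y) ^ (1 / 2 : ℝ) * Csq U x ^ (1 / 2 : ℝ) := by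
        have h2 : ∀ (a : H →L[ℂ] H),
            (∫⁻ s : ℝ, (‖a (star (U s) ψ.1)‖₊ : ℝ≥0∞) ^ (2 : ℝ)) ≤ Csq U a := by
          intro a
          have : ∀ s : ℝ, (‖a (star (U s) ψ.1)‖₊ : ℝ≥0∞) ^ (2 : ℝ)
              = (‖a (star (U s) ψ.1)‖₊ : ℝ≥0∞) ^ (2 : ℕ) := fun s =>
            (ENNReal.rpow_natCast _ 2).symm ▸ by norm_num
          simp_rw [this]
          exact le_iSup (fun ψ : {ψ : H // ‖ψ‖ = 1} =>
            ∫⁻ s : ℝ, (‖a (star (U s) ψ.1)‖₊ : ℝ≥0∞) ^ 2) ψ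
        exact mul_le_mul' (ENNReal.rpow_le_rpow (h2 _) (by norm_num))
          (ENNReal.rpow_le_rpow (h2 _) (by norm_num))

include hstar hUcont in
/-- Polarization: a product `c* d` of operators with finite constants lies in `𝒟`. -/
lemma star_mul_mem_span {c d : H →L[ℂ] H} (hc : Csq U c ≠ ⊤) (hd : Csq U d ≠ ⊤) :
    star c * d ∈ Submodule.span ℂ (posTIntegrable U) := by
  rw [polarization c d]
  refine Submodule.smul_mem _ _ (Submodule.sum_mem _ fun k _ => Submodule.smul_mem _ _ ?_)
  refine Submodule.subset_span ⟨d + Complex.I ^ k • c, ?_, rfl⟩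
  have h1 := Csq_add_le hstar hUcont d (Complex.I ^ k • c)
  rw [Csq_smul] at h1
  exact ne_top_of_le_ne_top (ENNReal.mul_ne_top (by norm_num)
    (ENNReal.add_ne_top.mpr ⟨hd, ENNReal.mul_ne_top
      (by rw [← ENNReal.coe_pow]; exact ENNReal.coe_ne_top) hc⟩)) h1

include hstar hUcont in
lemma mem_prod_mem_span {q p : H →L[ℂ] H}
    (hq : q ∈ posTIntegrable U) (hp : p ∈ posTIntegrable U) :
    q * p ∈ Submodule.span ℂ (posTIntegrable U) := by
  obtain ⟨b, hb, rfl⟩ := hq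
  obtain ⟨a, ha, rfl⟩ := hp
  have hassoc : (star b * b) * (star a * a) = star b * ((b * (star a * a))) := by
    rw [mul_assoc]
  rw [hassoc]
  refine star_mul_mem_span hstar hUcont hb ?_
  have h1 : Csq U (b * (star a * a)) = Csq U ((b * star a) * a) := by rw [mul_assoc]
  rw [h1]
  exact ne_top_of_le_ne_top (ENNReal.mul_ne_top
    (by rw [← ENNReal.coe_pow]; exact ENNReal.coe_ne_top) ha) (Csq_comp_le _ _)

include hstar hUcont in
/-- `𝒟` is closed under products. -/
lemma mul_mem_span {x y : H →L[ℂ] H}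
    (hx : x ∈ Submodule.span ℂ (posTIntegrable U))
    (hy : y ∈ Submodule.span ℂ (posTIntegrable U)) :
    x * y ∈ Submodule.span ℂ (posTIntegrable U) := by
  induction hx, hy using Submodule.span_induction₂ with
  | mem_mem p q hp hq => exact mem_prod_mem_span hstar hUcont hp hq
  | zero_left q hq => rw [zero_mul]; exact Submodule.zero_mem _
  | zero_right p hp => rw [mul_zero]; exact Submodule.zero_mem _
  | add_left x y z hx hy hz h1 h2 => rw [add_mul]; exact Submodule.add_mem _ h1 h2
  | add_right x y z hx hy hz h1 h2 => rw [mul_add]; exact Submodule.add_mem _ h1 h2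
  | smul_left r x y hx hy h1 => rw [smul_mul_assoc]; exact Submodule.smul_mem _ _ h1
  | smul_right r x y hx hy h1 => rw [mul_smul_comm]; exact Submodule.smul_mem _ _ h1

variable (hUadd : ∀ s t : ℝ, U (s + t) = U s * U t)
  (hUuni : ∀ t : ℝ, U t ∈ unitary (H →L[ℂ] H))

include hUadd in
/-- `𝒟` is invariant under conjugation by the group. -/
lemma conj_mem_span {x : H →L[ℂ] H}
    (hx : x ∈ Submodule.span ℂ (posTIntegrable U)) (t : ℝ) :
    U t * x * star (U t) ∈ Submodule.span ℂ (posTIntegrable U) := by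
  induction hx using Submodule.span_induction with
  | mem p hp =>
      obtain ⟨a, ha, rfl⟩ := hp
      refine Submodule.subset_span ⟨a * star (U t), ?_, ?_⟩
      · rw [Csq_mul_starU hUadd]; exact ha
      · rw [star_mul, star_star]
        noncomm_ring
  | zero => simp
  | add x y hx hy h1 h2 =>
      have : U t * (x + y) * star (U t) = U t * x * star (U t) + U t * y * star (U t) := by
        rw [mul_add, add_mul]
      rw [this]; exact Submodule.add_mem _ h1 h2
  | smul r x hx h1 =>
      have : U t * (r • x) * star (U t) = r • (U t * x * star (U t)) := by
        rw [mul_smul_comm, smul_mul_assoc]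
      rw [this]; exact Submodule.smul_mem _ _ h1

end csbound

end Helpers

/-- For a strongly continuous unitary one-parameter group `U` on a separable
complex Hilbert space, the quantity `‖·‖_𝒟` is finite on `𝒟 = span ℂ 𝒫` and defines a norm
there: it is subadditive, absolutely homogeneous and definite; it is *-invariant; it satisfies
`‖a*a‖_𝒟 = C_a²`; and for `x, y ∈ 𝒟` and `t ∈ ℝ` the operator `y U(t) x U(t)*` lies in `𝒟`
with `‖y U(t) x U(t)*‖_𝒟 ≤ C_{y*} C_x`. -/
theorem stmt13 {H : Type*}
    [NormedAddCommGroup H] [InnerProductSpace ℂ H] [CompleteSpace H] [SecondCountableTopology H]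
    (U : ℝ → (H →L[ℂ] H))
    (hU0 : U 0 = 1) (hUadd : ∀ s t : ℝ, U (s + t) = U s * U t)
    (hUuni : ∀ t : ℝ, U t ∈ unitary (H →L[ℂ] H))
    (hUcont : ∀ ψ : H, Continuous fun t : ℝ => U t ψ) :
    (∀ x ∈ Submodule.span ℂ (posTIntegrable U), Dnorm U x ≠ ⊤) ∧
    (∀ x ∈ Submodule.span ℂ (posTIntegrable U), ∀ y ∈ Submodule.span ℂ (posTIntegrable U),
        Dnorm U (x + y) ≤ Dnorm U x + Dnorm U y) ∧
    (∀ c : ℂ, ∀ x ∈ Submodule.span ℂ (posTIntegrable U),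
        Dnorm U (c • x) = (‖c‖₊ : ℝ≥0∞) * Dnorm U x) ∧
    (∀ x ∈ Submodule.span ℂ (posTIntegrable U), Dnorm U x = 0 → x = 0) ∧
    (∀ x : H →L[ℂ] H, Dnorm U (star x) = Dnorm U x) ∧
    (∀ a : H →L[ℂ] H, Csq U a ≠ ⊤ → Dnorm U (star a * a) = Csq U a) ∧
    (∀ x ∈ Submodule.span ℂ (posTIntegrable U), ∀ y ∈ Submodule.span ℂ (posTIntegrable U),
        ∀ t : ℝ, y * (U t * x * star (U t)) ∈ Submodule.span ℂ (posTIntegrable U) ∧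
          Dnorm U (y * (U t * x * star (U t)))
            ≤ Csq U (star y) ^ (1 / 2 : ℝ) * Csq U x ^ (1 / 2 : ℝ)) := by
  have hstar : ∀ t : ℝ, star (U t) = U (-t) := star_U hU0 hUadd hUuni
  refine ⟨?_, ?_, ?_, ?_, ?_, ?_, ?_⟩
  · -- finiteness on the span
    intro x hx
    induction hx using Submodule.span_induction with
    | mem p hp =>
        obtain ⟨a, ha, rfl⟩ := hp
        rw [Dnorm_star_mul_self]; exact ha
    | zero => rw [Dnorm_zero]; exact ENNReal.zero_ne_top
    | add x y hx hy h1 h2 =>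
        exact ne_top_of_le_ne_top (ENNReal.add_ne_top.mpr ⟨h1, h2⟩)
          (Dnorm_add_le hstar hUcont x y)
    | smul r x hx h1 =>
        rw [Dnorm_smul]; exact ENNReal.mul_ne_top ENNReal.coe_ne_top h1
  · exact fun x _ y _ => Dnorm_add_le hstar hUcont x y
  · exact fun c x _ => Dnorm_smul c x
  · exact fun x _ h => Dnorm_eq_zero hstar hUcont hU0 h
  · exact fun x => Dnorm_star x
  · exact fun a _ => Dnorm_star_mul_self a
  · intro x hx y hy t
    constructor
    · exact mul_mem_span hstar hUcont hy (conj_mem_span hUadd hx t)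
    · calc Dnorm U (y * (U t * x * star (U t)))
          ≤ Csq U (star y) ^ (1 / 2 : ℝ) * Csq U (U t * x * star (U t)) ^ (1 / 2 : ℝ) :=
            Dnorm_mul_le hstar hUcont _ y
        _ = Csq U (star y) ^ (1 / 2 : ℝ) * Csq U x ^ (1 / 2 : ℝ) := by
            rw [Csq_conj hUadd hUuni]

end
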